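/- Stability of the GA θ-ICN method: for real θ₁ and β, the complex number g = 1 − 2βi − 2β² + 4θ₁β³·i satisfies |g|² = 1 + 4(1 − 4θ₁)β⁴ + 16θ₁²β⁶. Consequently, if θ₁ ≥ 1/4 and 4θ₁²β² ≤ 4θ₁ − 1, then |g| ≤ 1. -/

import Mathlib

open Complex

theorem gaStep_stability (θ₁ β : ℝ)
    (g : ℂ)
    (hg : g = 1 - 2 * (β : ℂ) * Complex.I - 2 * (β : ℂ) ^ 2
        + 4 * (θ₁ : ℂ) * (β : ℂ) ^ 3 * Complex.I) :
    ‖g‖ ^ 2 = 1 + 4 * (1 - 4 * θ₁) * β ^ 4 + 16 * θ₁ ^ 2 * β ^ 6 ∧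
      (θ₁ ≥ 1 / 4 → 4 * θ₁ ^ 2 * β ^ 2 ≤ 4 * θ₁ - 1 → ‖g‖ ≤ 1) := by
  have hsq : ‖g‖ ^ 2 = 1 + 4 * (1 - 4 * θ₁) * β ^ 4 + 16 * θ₁ ^ 2 * β ^ 6 := by
    rw [Complex.sq_norm]
    subst hg
    simp [Complex.normSq_apply, ← Complex.ofReal_pow]
    ring
  refine ⟨hsq, fun h1 h2 => ?_⟩
  have hle : ‖g‖ ^ 2 ≤ 1 := by
    rw [hsq]
    nlinarith [pow_two_nonneg (β^2), sq_nonneg β, sq_nonneg (θ₁*β)]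
  nlinarith [norm_nonneg g]
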